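/- arXiv:0802.2438 — 2 statements merged into one kernel-verified Lean document; each statement's English description precedes it below -/
import Mathlib

section
/- Let n ≥ 3, let a₀,…,aₙ be nonzero complex numbers, bⱼ ∈ ℂ with bⱼ² = aⱼ, and let U₁ ⊆ ℂ be open. Let f₁, g₁ : U₁ → ℂ satisfy f₁(t)cos(g₁(t)) = b₀cos(t) and f₁(t)sin(g₁(t)) = b₁sin(t) for all t ∈ U₁, let fₖ(t) := bₖsin(t) and gₖ(t) := 0 for k = 2,…,n−1, and let h(t) := bₙsin(t). Then the map Y built from these functions satisfies Y = ι ∘ X on U₁×ℂⁿ⁻¹, where ι : ℂⁿ⁺¹ → ℂ²ⁿ⁻¹ is the linear isometric embedding ι(x₀,x₁,…,xₙ) := (x₀, x₁, x₂, 0, x₃, 0, …, x_{n-1}, 0, xₙ). -/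
noncomputable section

open Complex Finset

/-- `Cprod n k u = ∏_{j=k+1}^{n} cos(uʲ)` (zero-based: product of `cos (u j)` over `j ≥ k`). -/
def Cprod (n k : ℕ) (u : Fin n → ℂ) : ℂ :=
  ∏ j ∈ Finset.univ.filter (fun j : Fin n => k ≤ (j : ℕ)), Complex.cos (u j)

/-- Spherical-coordinate parametrization of the quadric `∑ xⱼ²/aⱼ = 1` (with `bⱼ² = aⱼ`). -/
def sphX (n : ℕ) (b : Fin (n+1) → ℂ) (u : Fin n → ℂ) : Fin (n+1) → ℂ :=
  Fin.cons (b 0 * Cprod n 0 u)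
    (fun k : Fin n => b k.succ * Cprod n (k.val + 1) u * Complex.sin (u k))

/-- With `n = m+1`, the map `Y : ℂⁿ → ℂ²ⁿ⁻¹` built from `f₁,…,f_{n-1}`, `g₁,…,g_{n-1}`, `h`. -/
def petY (m : ℕ) (f g : Fin m → ℂ → ℂ) (h : ℂ → ℂ) (u : Fin (m+1) → ℂ) :
    Fin (2*m+1) → ℂ :=
  fun i =>
    (∑ k : Fin m,
      Cprod (m+1) (k.val + 1) u * f k (u k.castSucc) *
        ((if (i : ℕ) = 2*k.val then 1 else 0) * Complex.cos (g k (u k.castSucc)) +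
         (if (i : ℕ) = 2*k.val + 1 then 1 else 0) * Complex.sin (g k (u k.castSucc))))
    + (if (i : ℕ) = 2*m then 1 else 0) * h (u (Fin.last m))

/-- The linear isometric embedding `ι : ℂⁿ⁺¹ → ℂ²ⁿ⁻¹` (with `n = m+1`),
`ι(x₀,x₁,…,xₙ) = (x₀, x₁, x₂, 0, x₃, 0, …, x_{n-1}, 0, xₙ)`. -/
def iotaEmb (m : ℕ) (x : Fin (m+2) → ℂ) : Fin (2*m+1) → ℂ :=
  fun i =>
    if (i : ℕ) = 0 then x 0
    else if (i : ℕ) = 1 then x 1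
    else if (i : ℕ) = 2*m then x (Fin.last (m+1))
    else if (i : ℕ) % 2 = 0 then x ⟨((i : ℕ)/2 + 1) % (m+2), Nat.mod_lt _ (by omega)⟩
    else 0

/-- the `z = (0,…,0)` member of Peterson's family coincides with the
quadric itself embedded in ℂ²ⁿ⁻¹ (here `n = m+1 ≥ 3`): `Y = ι ∘ X` on `U₁ × ℂⁿ⁻¹`. -/
theorem stmt18 (m : ℕ) (hm : 2 ≤ m)
    (a b : Fin (m+2) → ℂ) (ha : ∀ j, a j ≠ 0) (hb : ∀ j, (b j)^2 = a j)
    (U₁ : Set ℂ) (hU₁ : IsOpen U₁)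
    (f g : Fin m → ℂ → ℂ) (h : ℂ → ℂ)
    (hfg1 : ∀ t ∈ U₁, f ⟨0, by omega⟩ t * Complex.cos (g ⟨0, by omega⟩ t) = b 0 * Complex.cos t ∧
      f ⟨0, by omega⟩ t * Complex.sin (g ⟨0, by omega⟩ t) = b 1 * Complex.sin t)
    (hfk : ∀ k : Fin m, 1 ≤ k.val → ∀ t : ℂ,
      f k t = b ⟨k.val + 1, by omega⟩ * Complex.sin t ∧ g k t = 0)
    (hh : ∀ t : ℂ, h t = b (Fin.last (m+1)) * Complex.sin t) :
    ∀ u : Fin (m+1) → ℂ, u 0 ∈ U₁ →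
      petY m f g h u = iotaEmb m (sphX (m+1) b u) := by
  intro u hu
  obtain ⟨hcos, hsin⟩ := hfg1 (u 0) hu
  have hC0 : Cprod (m+1) 0 u = Complex.cos (u 0) * Cprod (m+1) 1 u := by
    have hset : (Finset.univ.filter (fun j : Fin (m+1) => 0 ≤ (j : ℕ)))
        = insert (0 : Fin (m+1)) (Finset.univ.filter (fun j : Fin (m+1) => 1 ≤ (j : ℕ))) := by
      ext j
      simp only [Finset.mem_filter, Finset.mem_univ, true_and, Finset.mem_insert, Fin.ext_iff, Fin.val_zero]
      omega
    have h0 : (0 : Fin (m+1)) ∉ Finset.univ.filter (fun j : Fin (m+1) => 1 ≤ (j : ℕ)) := by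
      simp
    rw [Cprod, hset, Finset.prod_insert h0, Cprod]
  have hCtop : Cprod (m+1) (m+1) u = 1 := by
    have hset : (Finset.univ.filter (fun j : Fin (m+1) => m+1 ≤ (j : ℕ))) = ∅ := by
      ext j
      simp only [Finset.mem_filter, Finset.mem_univ, true_and, Finset.notMem_empty, iff_false]
      have := j.isLt
      omega
    rw [Cprod, hset, Finset.prod_empty]
  have hsphX : ∀ k : Fin (m+1),
      sphX (m+1) b u k.succ = b k.succ * Cprod (m+1) (k.val+1) u * Complex.sin (u k) := by
    intro k
    simp [sphX]
  funext i
  simp only [petY, iotaEmb]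
  by_cases h0 : (i : ℕ) = 0
  · have hk0 : ∀ k : Fin m, k ≠ ⟨0, by omega⟩ →
        Cprod (m+1) (k.val + 1) u * f k (u k.castSucc) *
          ((if (i : ℕ) = 2*k.val then 1 else 0) * Complex.cos (g k (u k.castSucc)) +
           (if (i : ℕ) = 2*k.val + 1 then 1 else 0) * Complex.sin (g k (u k.castSucc))) = 0 := by
      intro k hk
      have hk' : k.val ≠ 0 := by simpa [Fin.ext_iff] using hk
      rw [if_neg (by omega), if_neg (by omega)]
      ring
    rw [Finset.sum_eq_single ⟨0, by omega⟩ (fun k _ hk => hk0 k hk) (by simp)]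
    rw [if_pos (by simp [h0]), if_neg (by simp; omega), if_neg (show ¬((i:ℕ) = 2*m) by omega),
      if_pos h0]
    have hcast : (Fin.castSucc (⟨0, by omega⟩ : Fin m)) = (0 : Fin (m+1)) := rfl
    rw [hcast]
    simp only [sphX, Fin.cons_zero]
    rw [hC0]
    have hc' : f ⟨0, by omega⟩ (u 0) * Complex.cos (g ⟨0, by omega⟩ (u 0)) = b 0 * Complex.cos (u 0) := hcos
    calc Cprod (m+1) (0 + 1) u * f ⟨0, by omega⟩ (u 0) *
          (1 * Complex.cos (g ⟨0, by omega⟩ (u 0)) + 0 * Complex.sin (g ⟨0, by omega⟩ (u 0))) + 0 * h (u (Fin.last m))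
        = Cprod (m+1) 1 u * (f ⟨0, by omega⟩ (u 0) * Complex.cos (g ⟨0, by omega⟩ (u 0))) := by ring
      _ = b 0 * (Complex.cos (u 0) * Cprod (m+1) 1 u) := by rw [hc']; ring
  · by_cases h1 : (i : ℕ) = 1
    · have hk0 : ∀ k : Fin m, k ≠ ⟨0, by omega⟩ →
          Cprod (m+1) (k.val + 1) u * f k (u k.castSucc) *
            ((if (i : ℕ) = 2*k.val then 1 else 0) * Complex.cos (g k (u k.castSucc)) +
             (if (i : ℕ) = 2*k.val + 1 then 1 else 0) * Complex.sin (g k (u k.castSucc))) = 0 := by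
        intro k hk
        have hk' : k.val ≠ 0 := by simpa [Fin.ext_iff] using hk
        rw [if_neg (by omega), if_neg (by omega)]
        ring
      rw [Finset.sum_eq_single ⟨0, by omega⟩ (fun k _ hk => hk0 k hk) (by simp)]
      rw [if_neg (show ¬((i:ℕ) = 2*(⟨0, by omega⟩ : Fin m).val) by simp only [Fin.val_mk]; omega), if_pos (by simp [h1]), if_neg (show ¬((i:ℕ) = 2*m) by omega),
        if_neg h0, if_pos h1]
      have hcast : (Fin.castSucc (⟨0, by omega⟩ : Fin m)) = (0 : Fin (m+1)) := rfl
      rw [hcast]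
      have h1eq : (1 : Fin (m+2)) = (0 : Fin (m+1)).succ := by simp [Fin.ext_iff]
      rw [h1eq, hsphX]
      have hs' : f ⟨0, by omega⟩ (u 0) * Complex.sin (g ⟨0, by omega⟩ (u 0)) = b 1 * Complex.sin (u 0) := hsin
      rw [← h1eq]
      calc Cprod (m+1) (0 + 1) u * f ⟨0, by omega⟩ (u 0) *
            (0 * Complex.cos (g ⟨0, by omega⟩ (u 0)) + 1 * Complex.sin (g ⟨0, by omega⟩ (u 0))) + 0 * h (u (Fin.last m))
          = Cprod (m+1) 1 u * (f ⟨0, by omega⟩ (u 0) * Complex.sin (g ⟨0, by omega⟩ (u 0))) := by ring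
        _ = b 1 * Cprod (m+1) (0+1) u * Complex.sin (u 0) := by rw [hs']; ring
    · by_cases h2m : (i : ℕ) = 2*m
      · rw [Finset.sum_eq_zero (fun k _ => by
          have hk := k.isLt
          rw [if_neg (by omega), if_neg (by omega)]
          ring)]
        rw [if_pos h2m, if_neg h0, if_neg h1, if_pos h2m]
        have hlast : Fin.last (m+1) = (Fin.last m).succ := by simp [Fin.ext_iff]
        rw [hlast, hsphX]
        have hCval : Cprod (m+1) ((Fin.last m).val + 1) u = 1 := by
          simpa [Fin.last] using hCtop
        rw [hCval, hh (u (Fin.last m)), ← hlast]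
        ring
      · by_cases hpar : (i : ℕ) % 2 = 0
        · have hlt := i.isLt
          set kv := (i : ℕ) / 2 with hkv
          have hkvlt : kv < m := by omega
          have hkv1 : 1 ≤ kv := by omega
          have hieq : (i : ℕ) = 2 * kv := by omega
          have hk0 : ∀ k : Fin m, k ≠ ⟨kv, hkvlt⟩ →
              Cprod (m+1) (k.val + 1) u * f k (u k.castSucc) *
                ((if (i : ℕ) = 2*k.val then 1 else 0) * Complex.cos (g k (u k.castSucc)) +
                 (if (i : ℕ) = 2*k.val + 1 then 1 else 0) * Complex.sin (g k (u k.castSucc))) = 0 := by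
            intro k hk
            have hk' : k.val ≠ kv := by simpa [Fin.ext_iff] using hk
            rw [if_neg (by omega), if_neg (by omega)]
            ring
          rw [Finset.sum_eq_single ⟨kv, hkvlt⟩ (fun k _ hk => hk0 k hk) (by simp)]
          rw [if_pos (by simpa using hieq), if_neg (by simp; omega), if_neg h2m,
            if_neg h0, if_neg h1, if_neg h2m, if_pos hpar]
          obtain ⟨hf, hg⟩ := hfk ⟨kv, hkvlt⟩ hkv1 (u (Fin.castSucc ⟨kv, hkvlt⟩))
          rw [hf, hg]
          have hmod : (kv + 1) % (m + 2) = kv + 1 := Nat.mod_eq_of_lt (by omega)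
          have hidx : (⟨((i : ℕ)/2 + 1) % (m+2), Nat.mod_lt _ (by omega)⟩ : Fin (m+2))
              = (Fin.succ (⟨kv, by omega⟩ : Fin (m+1))) := by
            simp [Fin.ext_iff, hmod, ← hkv]
          rw [hidx, hsphX]
          have hcast : (Fin.castSucc (⟨kv, hkvlt⟩ : Fin m)) = (⟨kv, by omega⟩ : Fin (m+1)) := rfl
          have hbeq : b (Fin.succ (⟨kv, by omega⟩ : Fin (m+1))) = b ⟨kv + 1, by omega⟩ := rfl
          rw [hcast, hbeq]
          simp only [Complex.cos_zero, Complex.sin_zero, Fin.val_mk]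
          ring
        · rw [Finset.sum_eq_zero (fun k _ => by
            have hk := k.isLt
            by_cases hcase : (i : ℕ) = 2*k.val + 1
            · obtain ⟨hf, hg⟩ := hfk k (by omega) (u k.castSucc)
              rw [hg, if_neg (by omega), if_pos hcase]
              simp
            · rw [if_neg (by omega), if_neg hcase]
              ring)]
          rw [if_neg (show ¬((i:ℕ) = 2*m) by omega), if_neg h0, if_neg h1,
            if_neg (show ¬((i:ℕ) = 2*m) by omega), if_neg hpar]
          ring
end
end

section
/- Let n ≥ 2, let U₁,…,Uₙ ⊆ ℂ be open, let f₁,…,f_{n-1}, g₁,…,g_{n-1} : Uₖ → ℂ and h : Uₙ → ℂ be twice differentiable, and let Y be the associated map. Let V ⊆ U₁×⋯×Uₙ be open and let N : V → ℂ²ⁿ⁻¹ be any map satisfying ⟨N(u), ∂ⱼY(u)⟩ = 0 for all u ∈ V and all 1 ≤ j ≤ n. Then the second fundamental form of Y with respect to N is diagonal: ⟨N(u), ∂ₖ∂ⱼY(u)⟩ = 0 for all u ∈ V with cos(uʲ) ≠ 0 and all 1 ≤ k < j ≤ n, where ∂ⱼ denotes the directional derivative along the j-th standard basis vector of ℂⁿ.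 -/
noncomputable section

open Complex Finset

/-- Complex bilinear (non-Hermitian) dot product on ℂᵐ. -/
def cdot {m : ℕ} (x y : Fin m → ℂ) : ℂ := ∑ i, x i * y i

/-- Directional (partial) derivative along the j-th standard basis vector of ℂⁿ. -/
def pd {n m : ℕ} (j : Fin n) (F : (Fin n → ℂ) → (Fin m → ℂ)) :
    (Fin n → ℂ) → (Fin m → ℂ) :=
  fun u => fderiv ℂ F u (Pi.single j 1)

/-! ### Auxiliary lemmas -/

lemma cdot_smul_right {m : ℕ} (x : Fin m → ℂ) (c : ℂ) (y : Fin m → ℂ) :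
    cdot x (c • y) = c * cdot x y := by
  simp only [cdot, Pi.smul_apply, smul_eq_mul, Finset.mul_sum]
  exact Finset.sum_congr rfl fun i _ => by ring

lemma fderiv_dir_zero {E F : Type*} [NormedAddCommGroup E] [NormedSpace ℂ E]
    [NormedAddCommGroup F] [NormedSpace ℂ F]
    {G : E → F} {v : E} (hG : ∀ u (t : ℂ), G (u + t • v) = G u) (u : E) :
    fderiv ℂ G u v = 0 := by
  by_cases hd : DifferentiableAt ℂ G u
  · rw [← hd.lineDeriv_eq_fderiv]
    have h1 : (fun t : ℂ => G (u + t • v)) = fun _ => G u := funext fun t => hG u t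
    rw [lineDeriv, h1, deriv_const]
  · simp [fderiv_zero_of_not_differentiableAt hd]

lemma fderiv_shift_invariant {E F : Type*} [NormedAddCommGroup E] [NormedSpace ℂ E]
    [NormedAddCommGroup F] [NormedSpace ℂ F]
    {G : E → F} {c : E} (hG : ∀ w, G (w + c) = G w) (u : E) :
    fderiv ℂ G (u + c) = fderiv ℂ G u := by
  have hfun : (fun w => G (w + c)) = G := funext hG
  by_cases hd : DifferentiableAt ℂ G (u + c)
  · have ht : HasFDerivAt (fun w : E => w + c) (ContinuousLinearMap.id ℂ E) u :=
      (hasFDerivAt_id u).add_const c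
    have h2 : HasFDerivAt (fun w => G (w + c))
        ((fderiv ℂ G (u + c)).comp (ContinuousLinearMap.id ℂ E)) u :=
      HasFDerivAt.comp u hd.hasFDerivAt ht
    rw [hfun] at h2
    rw [h2.fderiv, ContinuousLinearMap.comp_id]
  · have hd2 : ¬ DifferentiableAt ℂ G u := by
      intro hu
      apply hd
      have htr : DifferentiableAt ℂ (fun w : E => w + -c) (u + c) :=
        differentiableAt_id.add_const _
      have hu' : DifferentiableAt ℂ G ((u + c) + -c) := by rwa [add_neg_cancel_right]
      have h3 : DifferentiableAt ℂ (fun w => G (w + -c)) (u + c) := by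
        exact hu'.comp (u + c) htr
      have h4 : (fun w : E => G (w + -c)) = G := funext fun w => by
        conv_rhs => rw [← neg_add_cancel_right w c, hG]
      rwa [h4] at h3
    rw [fderiv_zero_of_not_differentiableAt hd, fderiv_zero_of_not_differentiableAt hd2]

/-- The part of the `l`-th coefficient of `petY` that omits the factor `cos (u j)`. -/
def Cex (m : ℕ) (l : Fin m) (j : Fin (m+1)) (u : Fin (m+1) → ℂ) : ℂ :=
  ∏ i' ∈ Finset.univ.filter (fun i' : Fin (m+1) => (l : ℕ) + 1 ≤ (i' : ℕ) ∧ i' ≠ j),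
    Complex.cos (u i')

/-- The part of `petY` (divided by `cos (u j)`) consisting of the terms `l < j`. -/
def Rmap (m : ℕ) (f g : Fin m → ℂ → ℂ) (j : Fin (m+1)) (u : Fin (m+1) → ℂ) :
    Fin (2*m+1) → ℂ := fun i =>
  ∑ l ∈ Finset.univ.filter (fun l : Fin m => (l : ℕ) < (j : ℕ)),
    Cex m l j u * f l (u l.castSucc) *
      ((if (i : ℕ) = 2*l.val then 1 else 0) * Complex.cos (g l (u l.castSucc)) +
       (if (i : ℕ) = 2*l.val + 1 then 1 else 0) * Complex.sin (g l (u l.castSucc)))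

/-- The part of `petY` consisting of the terms `l ≥ j` and the `h`-term. -/
def Qmap (m : ℕ) (f g : Fin m → ℂ → ℂ) (h : ℂ → ℂ) (j : Fin (m+1)) (u : Fin (m+1) → ℂ) :
    Fin (2*m+1) → ℂ := fun i =>
  (∑ l ∈ Finset.univ.filter (fun l : Fin m => (j : ℕ) ≤ (l : ℕ)),
    Cprod (m+1) (l.val + 1) u * f l (u l.castSucc) *
      ((if (i : ℕ) = 2*l.val then 1 else 0) * Complex.cos (g l (u l.castSucc)) +
       (if (i : ℕ) = 2*l.val + 1 then 1 else 0) * Complex.sin (g l (u l.castSucc))))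
  + (if (i : ℕ) = 2*m then 1 else 0) * h (u (Fin.last m))

lemma Cprod_eq_cos_mul_Cex (m : ℕ) (l : Fin m) (j : Fin (m+1)) (hlj : (l : ℕ) < (j : ℕ))
    (u : Fin (m+1) → ℂ) :
    Cprod (m+1) (l.val + 1) u = Complex.cos (u j) * Cex m l j u := by
  classical
  have hjmem : j ∈ Finset.univ.filter (fun i' : Fin (m+1) => (l : ℕ) + 1 ≤ (i' : ℕ)) := by
    simp only [Finset.mem_filter, Finset.mem_univ, true_and]; omega
  have herase :
      (Finset.univ.filter (fun i' : Fin (m+1) => (l : ℕ) + 1 ≤ (i' : ℕ))).erase j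
        = Finset.univ.filter (fun i' : Fin (m+1) => (l : ℕ) + 1 ≤ (i' : ℕ) ∧ i' ≠ j) := by
    ext i'
    simp only [Finset.mem_erase, Finset.mem_filter, Finset.mem_univ, true_and]
    tauto
  rw [Cprod, ← Finset.mul_prod_erase _ _ hjmem, herase, Cex]

lemma petY_split (m : ℕ) (f g : Fin m → ℂ → ℂ) (h : ℂ → ℂ) (j : Fin (m+1))
    (u : Fin (m+1) → ℂ) :
    petY m f g h u = Complex.cos (u j) • Rmap m f g j u + Qmap m f g h j u := by
  classical
  funext i
  simp only [petY, Rmap, Qmap, Pi.add_apply, Pi.smul_apply, smul_eq_mul]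
  rw [← Finset.sum_filter_add_sum_filter_not Finset.univ (fun l : Fin m => (l : ℕ) < (j : ℕ))]
  have hfilter : Finset.univ.filter (fun l : Fin m => ¬ (l : ℕ) < (j : ℕ))
      = Finset.univ.filter (fun l : Fin m => (j : ℕ) ≤ (l : ℕ)) := by
    apply Finset.filter_congr; intro l _; simp [not_lt]
  rw [hfilter, Finset.mul_sum]
  have hsum : ∀ l ∈ Finset.univ.filter (fun l : Fin m => (l : ℕ) < (j : ℕ)),
      Cprod (m+1) (l.val + 1) u * f l (u l.castSucc) *
        ((if (i : ℕ) = 2*l.val then 1 else 0) * Complex.cos (g l (u l.castSucc)) +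
         (if (i : ℕ) = 2*l.val + 1 then 1 else 0) * Complex.sin (g l (u l.castSucc)))
      = Complex.cos (u j) *
        (Cex m l j u * f l (u l.castSucc) *
          ((if (i : ℕ) = 2*l.val then 1 else 0) * Complex.cos (g l (u l.castSucc)) +
           (if (i : ℕ) = 2*l.val + 1 then 1 else 0) * Complex.sin (g l (u l.castSucc)))) := by
    intro l hl
    rw [Finset.mem_filter] at hl
    rw [Cprod_eq_cos_mul_Cex m l j hl.2 u]
    ring
  rw [Finset.sum_congr rfl hsum]
  ring

lemma add_single_apply {n : ℕ} (u : Fin n → ℂ) (t : ℂ) (p q : Fin n) (hpq : q ≠ p) :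
    (u + t • (Pi.single p 1 : Fin n → ℂ)) q = u q := by
  simp [Pi.single_eq_of_ne hpq]

lemma Rmap_line (m : ℕ) (f g : Fin m → ℂ → ℂ) (j : Fin (m+1)) (u : Fin (m+1) → ℂ) (t : ℂ) :
    Rmap m f g j (u + t • (Pi.single j 1 : Fin (m+1) → ℂ)) = Rmap m f g j u := by
  funext i
  simp only [Rmap]
  apply Finset.sum_congr rfl
  intro l hl
  rw [Finset.mem_filter] at hl
  have hcast : l.castSucc ≠ j := by
    have : (l.castSucc : ℕ) ≠ (j : ℕ) := by simp only [Fin.coe_castSucc]; omega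
    exact fun he => this (by rw [he])
  rw [add_single_apply u t j l.castSucc hcast]
  congr 1
  · congr 1
    simp only [Cex]
    apply Finset.prod_congr rfl
    intro i' hi'
    rw [Finset.mem_filter] at hi'
    rw [add_single_apply u t j i' hi'.2.2]

lemma Qmap_line (m : ℕ) (f g : Fin m → ℂ → ℂ) (h : ℂ → ℂ) (j k : Fin (m+1)) (hkj : k < j)
    (u : Fin (m+1) → ℂ) (t : ℂ) :
    Qmap m f g h j (u + t • (Pi.single k 1 : Fin (m+1) → ℂ)) = Qmap m f g h j u := by
  funext i
  simp only [Qmap]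
  have hkj' : (k : ℕ) < (j : ℕ) := hkj
  congr 1
  · apply Finset.sum_congr rfl
    intro l hl
    rw [Finset.mem_filter] at hl
    have hcast : l.castSucc ≠ k := by
      have : (k : ℕ) ≠ (l.castSucc : ℕ) := by simp only [Fin.coe_castSucc]; omega
      exact fun he => this (by rw [he])
    rw [add_single_apply u t k l.castSucc hcast]
    congr 2
    simp only [Cprod]
    apply Finset.prod_congr rfl
    intro i' hi'
    rw [Finset.mem_filter] at hi'
    have hik : i' ≠ k := by
      have : (k : ℕ) ≠ (i' : ℕ) := by omega
      exact fun he => this (by rw [he])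
    rw [add_single_apply u t k i' hik]
  · have hlk : Fin.last m ≠ k := by
      have hj := j.isLt
      have : (k : ℕ) ≠ (Fin.last m : ℕ) := by simp only [Fin.val_last]; omega
      exact fun he => this (by rw [he])
    rw [add_single_apply u t k _ hlk]

lemma diffAt_comp_eval {n : ℕ} {φ : ℂ → ℂ} {p : Fin n} {u : Fin n → ℂ}
    (hφ : DifferentiableAt ℂ φ (u p)) :
    DifferentiableAt ℂ (fun u : Fin n → ℂ => φ (u p)) u := by
  exact hφ.comp u (differentiableAt_apply (𝕜 := ℂ) p u)

lemma diffAt_cosprod {n : ℕ} (s : Finset (Fin n)) (u : Fin n → ℂ) :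
    DifferentiableAt ℂ (fun u : Fin n → ℂ => ∏ i ∈ s, Complex.cos (u i)) u := by
  classical
  induction s using Finset.induction with
  | empty => simp only [Finset.prod_empty]; exact differentiableAt_const 1
  | insert _ _ hx ih =>
      simp only [Finset.prod_insert hx]
      exact ((differentiableAt_apply (𝕜 := ℂ) _ u).ccos).mul ih

lemma hasFDerivAt_cos_eval {n : ℕ} (u : Fin n → ℂ) (p : Fin n) :
    HasFDerivAt (fun u : Fin n → ℂ => Complex.cos (u p))
      ((-Complex.sin (u p)) • (ContinuousLinearMap.proj p : (Fin n → ℂ) →L[ℂ] ℂ)) u :=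
  (Complex.hasDerivAt_cos (u p)).comp_hasFDerivAt (f := fun u : Fin n → ℂ => u p) u (hasFDerivAt_apply (𝕜 := ℂ) p u)

lemma hasFDerivAt_negsin_eval {n : ℕ} (u : Fin n → ℂ) (p : Fin n) :
    HasFDerivAt (fun u : Fin n → ℂ => -Complex.sin (u p))
      ((-Complex.cos (u p)) • (ContinuousLinearMap.proj p : (Fin n → ℂ) →L[ℂ] ℂ)) u :=
  ((Complex.hasDerivAt_sin (u p)).neg).comp_hasFDerivAt (f := fun u : Fin n → ℂ => u p) u (hasFDerivAt_apply (𝕜 := ℂ) p u)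

theorem stmt19 (m : ℕ) (hm : 1 ≤ m)
    (U : Fin (m+1) → Set ℂ) (hU : ∀ k, IsOpen (U k))
    (f g : Fin m → ℂ → ℂ) (h : ℂ → ℂ)
    (hf : ∀ k : Fin m, DifferentiableOn ℂ (f k) (U k.castSucc))
    (hf' : ∀ k : Fin m, DifferentiableOn ℂ (deriv (f k)) (U k.castSucc))
    (hg : ∀ k : Fin m, DifferentiableOn ℂ (g k) (U k.castSucc))
    (hg' : ∀ k : Fin m, DifferentiableOn ℂ (deriv (g k)) (U k.castSucc))
    (hh : DifferentiableOn ℂ h (U (Fin.last m)))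
    (hh' : DifferentiableOn ℂ (deriv h) (U (Fin.last m)))
    (V : Set (Fin (m+1) → ℂ)) (hV : IsOpen V)
    (hVsub : ∀ u ∈ V, ∀ k, u k ∈ U k)
    (N : (Fin (m+1) → ℂ) → (Fin (2*m+1) → ℂ))
    (hN : ∀ u ∈ V, ∀ j : Fin (m+1), cdot (N u) (pd j (petY m f g h) u) = 0) :
    ∀ u ∈ V, ∀ j k : Fin (m+1), k < j → Complex.cos (u j) ≠ 0 →
      cdot (N u) (pd k (pd j (petY m f g h)) u) = 0 := by
  classical
  intro u₀ hu₀ j k hkj hcos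
  have hkjne : k ≠ j := ne_of_lt hkj
  set R := Rmap m f g j with hRdef
  set Q := Qmap m f g h j with hQdef
  -- differentiability of R and Q at points of V
  have hRdiff : ∀ u ∈ V, DifferentiableAt ℂ R u := by
    intro u hu
    rw [hRdef]
    apply differentiableAt_pi.mpr
    intro i
    simp only [Rmap]
    apply DifferentiableAt.fun_sum
    intro l _
    have hfl : DifferentiableAt ℂ (f l) (u l.castSucc) :=
      (hf l).differentiableAt ((hU l.castSucc).mem_nhds (hVsub u hu l.castSucc))
    have hgl : DifferentiableAt ℂ (g l) (u l.castSucc) :=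
      (hg l).differentiableAt ((hU l.castSucc).mem_nhds (hVsub u hu l.castSucc))
    have h1 : DifferentiableAt ℂ (fun u : Fin (m+1) → ℂ => Cex m l j u) u := by
      simpa [Cex] using diffAt_cosprod
        (Finset.univ.filter (fun i' : Fin (m+1) => (l : ℕ) + 1 ≤ (i' : ℕ) ∧ i' ≠ j)) u
    exact (h1.mul (diffAt_comp_eval hfl)).mul
      (((differentiableAt_const _).mul (diffAt_comp_eval hgl.ccos)).add
       ((differentiableAt_const _).mul (diffAt_comp_eval hgl.csin)))
  have hQdiff : ∀ u ∈ V, DifferentiableAt ℂ Q u := by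
    intro u hu
    rw [hQdef]
    apply differentiableAt_pi.mpr
    intro i
    simp only [Qmap]
    apply DifferentiableAt.add
    · apply DifferentiableAt.fun_sum
      intro l _
      have hfl : DifferentiableAt ℂ (f l) (u l.castSucc) :=
        (hf l).differentiableAt ((hU l.castSucc).mem_nhds (hVsub u hu l.castSucc))
      have hgl : DifferentiableAt ℂ (g l) (u l.castSucc) :=
        (hg l).differentiableAt ((hU l.castSucc).mem_nhds (hVsub u hu l.castSucc))
      have h1 : DifferentiableAt ℂ (fun u : Fin (m+1) → ℂ => Cprod (m+1) (l.val + 1) u) u := by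
        simpa [Cprod] using diffAt_cosprod
          (Finset.univ.filter (fun i' : Fin (m+1) => l.val + 1 ≤ (i' : ℕ))) u
      exact (h1.mul (diffAt_comp_eval hfl)).mul
        (((differentiableAt_const _).mul (diffAt_comp_eval hgl.ccos)).add
         ((differentiableAt_const _).mul (diffAt_comp_eval hgl.csin)))
    · have hhl : DifferentiableAt ℂ h (u (Fin.last m)) :=
        hh.differentiableAt ((hU (Fin.last m)).mem_nhds (hVsub u hu (Fin.last m)))
      exact (differentiableAt_const _).mul (diffAt_comp_eval hhl)
  -- the split of Y
  have hYsplit : petY m f g h = fun u => Complex.cos (u j) • R u + Q u := by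
    funext u; exact petY_split m f g h j u
  -- derivative of the cos • R part
  have hApart : ∀ u ∈ V, HasFDerivAt (fun u : Fin (m+1) → ℂ => Complex.cos (u j) • R u)
      (Complex.cos (u j) • fderiv ℂ R u +
        ((-Complex.sin (u j)) •
          (ContinuousLinearMap.proj j : (Fin (m+1) → ℂ) →L[ℂ] ℂ)).smulRight (R u)) u :=
    fun u hu => (hasFDerivAt_cos_eval u j).smul (hRdiff u hu).hasFDerivAt
  -- Step A : formula for pd j Y on V
  have stepA : ∀ u ∈ V, pd j (petY m f g h) u
      = (-Complex.sin (u j)) • R u + fderiv ℂ Q u (Pi.single j 1) := by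
    intro u hu
    show fderiv ℂ (petY m f g h) u (Pi.single j 1) = _
    rw [hYsplit, fderiv_fun_add (hApart u hu).differentiableAt (hQdiff u hu),
      ContinuousLinearMap.add_apply, (hApart u hu).fderiv]
    simp only [ContinuousLinearMap.add_apply, ContinuousLinearMap.smul_apply,
      ContinuousLinearMap.smulRight_apply, ContinuousLinearMap.proj_apply]
    rw [fderiv_dir_zero (fun u t => Rmap_line m f g j u t) u]
    simp [Pi.single_eq_same]
  -- Step C : formula for pd k Y at u₀
  have stepC : pd k (petY m f g h) u₀
      = Complex.cos (u₀ j) • fderiv ℂ R u₀ (Pi.single k 1) := by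
    show fderiv ℂ (petY m f g h) u₀ (Pi.single k 1) = _
    rw [hYsplit, fderiv_fun_add (hApart u₀ hu₀).differentiableAt (hQdiff u₀ hu₀),
      ContinuousLinearMap.add_apply, (hApart u₀ hu₀).fderiv]
    simp only [ContinuousLinearMap.add_apply, ContinuousLinearMap.smul_apply,
      ContinuousLinearMap.smulRight_apply, ContinuousLinearMap.proj_apply]
    rw [fderiv_dir_zero (fun u t => Qmap_line m f g h j k hkj u t) u₀]
    simp [Pi.single_eq_of_ne (Ne.symm hkjne)]
  -- the candidate for pd j Y near u₀
  set Fn : (Fin (m+1) → ℂ) → Fin (2*m+1) → ℂ :=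
    fun u => (-Complex.sin (u j)) • R u + fderiv ℂ Q u (Pi.single j 1) with hFndef
  have hfd : fderiv ℂ (pd j (petY m f g h)) u₀ = fderiv ℂ Fn u₀ :=
    (Filter.eventuallyEq_of_mem (hV.mem_nhds hu₀) (fun u hu => stepA u hu)).fderiv_eq
  have hGpart : HasFDerivAt (fun u : Fin (m+1) → ℂ => (-Complex.sin (u j)) • R u)
      ((-Complex.sin (u₀ j)) • fderiv ℂ R u₀ +
        ((-Complex.cos (u₀ j)) •
          (ContinuousLinearMap.proj j : (Fin (m+1) → ℂ) →L[ℂ] ℂ)).smulRight (R u₀)) u₀ :=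
    (hasFDerivAt_negsin_eval u₀ j).smul (hRdiff u₀ hu₀).hasFDerivAt
  -- value of cdot on pd k Y
  have hd0 : cdot (N u₀) (pd k (petY m f g h) u₀) = 0 := hN u₀ hu₀ k
  rw [stepC, cdot_smul_right] at hd0
  have hdval : cdot (N u₀) (fderiv ℂ R u₀ (Pi.single k 1)) = 0 :=
    (mul_eq_zero.mp hd0).resolve_left hcos
  -- main computation
  show cdot (N u₀) (fderiv ℂ (pd j (petY m f g h)) u₀ (Pi.single k 1)) = 0
  rw [hfd]
  by_cases hW : DifferentiableAt ℂ
      (fun u : Fin (m+1) → ℂ => fderiv ℂ Q u (Pi.single j 1)) u₀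
  · have hsum : fderiv ℂ Fn u₀
        = fderiv ℂ (fun u : Fin (m+1) → ℂ => (-Complex.sin (u j)) • R u) u₀ +
          fderiv ℂ (fun u : Fin (m+1) → ℂ => fderiv ℂ Q u (Pi.single j 1)) u₀ := by
      rw [hFndef]
      exact fderiv_fun_add hGpart.differentiableAt hW
    have hWline : ∀ (u : Fin (m+1) → ℂ) (t : ℂ),
        fderiv ℂ Q (u + t • (Pi.single k 1 : Fin (m+1) → ℂ)) (Pi.single j 1)
          = fderiv ℂ Q u (Pi.single j 1) := by
      intro u t
      rw [fderiv_shift_invariant (fun w => Qmap_line m f g h j k hkj w t) u]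
    have hW0 : fderiv ℂ (fun u : Fin (m+1) → ℂ => fderiv ℂ Q u (Pi.single j 1)) u₀
        (Pi.single k 1) = 0 :=
      fderiv_dir_zero (G := fun u : Fin (m+1) → ℂ => fderiv ℂ Q u (Pi.single j 1))
        (v := (Pi.single k 1 : Fin (m+1) → ℂ)) hWline u₀
    rw [hsum, ContinuousLinearMap.add_apply, hGpart.fderiv]
    simp only [ContinuousLinearMap.add_apply, ContinuousLinearMap.smul_apply,
      ContinuousLinearMap.smulRight_apply, ContinuousLinearMap.proj_apply]
    rw [hW0]
    simp only [Pi.single_eq_of_ne (Ne.symm hkjne), mul_zero, zero_smul, add_zero, smul_zero]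
    rw [cdot_smul_right, hdval, mul_zero]
  · have hFn : ¬ DifferentiableAt ℂ Fn u₀ := by
      intro hdFn
      apply hW
      have h5 : (fun u : Fin (m+1) → ℂ => Fn u - (-Complex.sin (u j)) • R u)
          = fun u : Fin (m+1) → ℂ => fderiv ℂ Q u (Pi.single j 1) := by
        funext u
        rw [hFndef]
        simp
      have := hdFn.fun_sub hGpart.differentiableAt
      rwa [h5] at this
    rw [fderiv_zero_of_not_differentiableAt hFn]
    simp [cdot]
end
end
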